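/- Let Y be a weakly irreducible CMC under P, and let P° be another probability measure on path space under which Y is a weakly irreducible CMC on the same family 𝔽 with the same cotransitions as under P. Then P° = P_h for the harmonic function h(x) = P°(Y_n = x)/P(Y_n = x) (x ∈ 𝔽_n), which is strictly positive with h(e) = 1. -/

import Mathlib

open MeasureTheory Filter

/-- If P° is another law under which Y is a weakly irreducible CMC on
the same family with the same cotransitions as under P, then P° = P_h for the
strictly positive harmonic function h(x) = P°(Y_n = x)/P(Y_n = x), h(e) = 1. -/
theorem same_cotransitions_implies_h_transform
    {Ω F : Type*} [MeasurableSpace Ω] [MeasurableSpace F] [MeasurableSingletonClass F]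
    (P : Measure Ω) [IsProbabilityMeasure P]
    (deg : F → ℕ) (hfin : ∀ n, {x : F | deg x = n}.Finite)
    (e : F) (hdeg_e : deg e = 0) (hF0 : ∀ x : F, deg x = 0 → x = e)
    (Y : ℕ → Ω → F) (hY : ∀ n, Measurable (Y n))
    (hadapted : ∀ n, ∀ᵐ ω ∂P, deg (Y n ω) = n)
    (hY0 : ∀ᵐ ω ∂P, Y 0 ω = e)
    (hirr : ∀ (n : ℕ) (x : F), deg x = n → 0 < P {ω | Y n ω = x})
    (hMarkov : ∀ (n : ℕ) (z : F) (path : ℕ → F),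
      P ((⋂ i ∈ Finset.range (n + 1), {ω | Y i ω = path i}) ∩ {ω | Y (n + 1) ω = z})
          * P {ω | Y n ω = path n}
        = P ({ω | Y n ω = path n} ∩ {ω | Y (n + 1) ω = z})
          * P (⋂ i ∈ Finset.range (n + 1), {ω | Y i ω = path i}))
    -- P° : Y is a weakly irreducible CMC under Q := P° as well
    (Q : Measure Ω) [IsProbabilityMeasure Q]
    (hQ0 : ∀ᵐ ω ∂Q, Y 0 ω = e)
    (hQadapted : ∀ n, ∀ᵐ ω ∂Q, deg (Y n ω) = n)
    (hQirr : ∀ (n : ℕ) (x : F), deg x = n → 0 < Q {ω | Y n ω = x})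
    (hQMarkov : ∀ (n : ℕ) (z : F) (path : ℕ → F),
      Q ((⋂ i ∈ Finset.range (n + 1), {ω | Y i ω = path i}) ∩ {ω | Y (n + 1) ω = z})
          * Q {ω | Y n ω = path n}
        = Q ({ω | Y n ω = path n} ∩ {ω | Y (n + 1) ω = z})
          * Q (⋂ i ∈ Finset.range (n + 1), {ω | Y i ω = path i}))
    -- same cotransitions
    (hcot : ∀ (n : ℕ) (x y : F), deg x = n → deg y = n + 1 →
      (Q ({ω | Y n ω = x} ∩ {ω | Y (n + 1) ω = y})).toReal
          / (Q {ω | Y (n + 1) ω = y}).toReal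
        = (P ({ω | Y n ω = x} ∩ {ω | Y (n + 1) ω = y})).toReal
          / (P {ω | Y (n + 1) ω = y}).toReal)
    -- the candidate harmonic function h(x) = P°(Y_{deg x} = x)/P(Y_{deg x} = x)
    (h : F → ℝ)
    (hdef : ∀ x : F, h x = (Q {ω | Y (deg x) ω = x}).toReal
                            / (P {ω | Y (deg x) ω = x}).toReal) :
    (∀ x, 0 < h x) ∧ h e = 1
    ∧ (∀ (n : ℕ) (x : F), deg x = n →
        h x = ∑ y ∈ (hfin (n + 1)).toFinset,
          ((P ({ω | Y n ω = x} ∩ {ω | Y (n + 1) ω = y})).toReal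
            / (P {ω | Y n ω = x}).toReal) * h y)
    -- Q = P_h: h is the density of Q with respect to P on every cylinder set
    ∧ (∀ (n : ℕ) (path : ℕ → F), (∀ i ≤ n, deg (path i) = i) →
        (Q (⋂ i ∈ Finset.Icc 1 n, {ω | Y i ω = path i})).toReal
          = h (path n) * (P (⋂ i ∈ Finset.Icc 1 n, {ω | Y i ω = path i})).toReal) := by
  have meas : ∀ (n : ℕ) (x : F), MeasurableSet {ω | Y n ω = x} :=
    fun n x => (hY n) (measurableSet_singleton x)
  have hPpos : ∀ (n : ℕ) (x : F), deg x = n → 0 < (P {ω | Y n ω = x}).toReal :=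
    fun n x hx => ENNReal.toReal_pos (hirr n x hx).ne' (measure_ne_top _ _)
  have hQpos : ∀ (n : ℕ) (x : F), deg x = n → 0 < (Q {ω | Y n ω = x}).toReal :=
    fun n x hx => ENNReal.toReal_pos (hQirr n x hx).ne' (measure_ne_top _ _)
  have hpos : ∀ x, 0 < h x := by
    intro x
    rw [hdef]
    exact div_pos (hQpos _ x rfl) (hPpos _ x rfl)
  have hPe : P {ω | Y 0 ω = e} = 1 := by
    refine (prob_compl_eq_zero_iff (meas 0 e)).mp ?_
    simpa [ae_iff, Set.compl_setOf] using hY0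
  have hQe : Q {ω | Y 0 ω = e} = 1 := by
    refine (prob_compl_eq_zero_iff (meas 0 e)).mp ?_
    simpa [ae_iff, Set.compl_setOf] using hQ0
  have he1 : h e = 1 := by
    rw [hdef, hdeg_e, hPe, hQe]
    simp
  -- consequence of same cotransitions
  have key : ∀ (n : ℕ) (x y : F), deg x = n → deg y = n + 1 →
      (Q ({ω | Y n ω = x} ∩ {ω | Y (n + 1) ω = y})).toReal
        = (P ({ω | Y n ω = x} ∩ {ω | Y (n + 1) ω = y})).toReal * h y := by
    intro n x y hx hy
    have hQy := hQpos (n + 1) y hy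
    have hPy := hPpos (n + 1) y hy
    have hc := hcot n x y hx hy
    have hhy : h y = (Q {ω | Y (n + 1) ω = y}).toReal / (P {ω | Y (n + 1) ω = y}).toReal := by
      rw [hdef, hy]
    rw [hhy]
    rw [div_eq_div_iff hQy.ne' hPy.ne'] at hc
    field_simp
    linarith [hc]
  -- decomposition over the (n+1)-th level
  have decomp : ∀ (n : ℕ) (μ : Measure Ω), (∀ᵐ ω ∂μ, deg (Y (n + 1) ω) = n + 1) →
      ∀ A : Set Ω, MeasurableSet A →
      μ A = ∑ y ∈ (hfin (n + 1)).toFinset, μ (A ∩ {ω | Y (n + 1) ω = y}) := by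
    intro n μ hae A hA
    have hnull : μ (⋃ y ∈ (hfin (n + 1)).toFinset, {ω | Y (n + 1) ω = y})ᶜ = 0 := by
      rw [ae_iff] at hae
      refine measure_mono_null ?_ hae
      intro ω hω
      simp only [Set.mem_compl_iff, Set.mem_iUnion, Set.mem_setOf_eq, not_exists] at hω ⊢
      intro hd
      exact hω (Y (n + 1) ω) ((hfin (n + 1)).mem_toFinset.mpr hd) rfl
    have hdisj : ((hfin (n + 1)).toFinset : Set F).PairwiseDisjoint
        (fun y => A ∩ {ω | Y (n + 1) ω = y}) := by
      intro y _ y' _ hne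
      refine Set.disjoint_left.mpr ?_
      rintro ω ⟨_, h1⟩ ⟨_, h2⟩
      exact hne (h1.symm.trans h2)
    calc μ A = μ (A ∩ ⋃ y ∈ (hfin (n + 1)).toFinset, {ω | Y (n + 1) ω = y}) :=
        (measure_inter_conull hnull).symm
      _ = μ (⋃ y ∈ (hfin (n + 1)).toFinset, A ∩ {ω | Y (n + 1) ω = y}) := by
        rw [Set.inter_iUnion₂]
      _ = ∑ y ∈ (hfin (n + 1)).toFinset, μ (A ∩ {ω | Y (n + 1) ω = y}) :=
        measure_biUnion_finset hdisj (fun y _ => hA.inter (meas _ _))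
  -- harmonicity
  have harm : ∀ (n : ℕ) (x : F), deg x = n →
      h x = ∑ y ∈ (hfin (n + 1)).toFinset,
        ((P ({ω | Y n ω = x} ∩ {ω | Y (n + 1) ω = y})).toReal
          / (P {ω | Y n ω = x}).toReal) * h y := by
    intro n x hx
    have hQsum : (Q {ω | Y n ω = x}).toReal
        = ∑ y ∈ (hfin (n + 1)).toFinset,
            (P ({ω | Y n ω = x} ∩ {ω | Y (n + 1) ω = y})).toReal * h y := by
      rw [decomp n Q (hQadapted (n + 1)) _ (meas n x),
        ENNReal.toReal_sum (fun y _ => measure_ne_top _ _)]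
      exact Finset.sum_congr rfl fun y hy => key n x y hx ((hfin (n + 1)).mem_toFinset.mp hy)
    rw [hdef, hx, hQsum, Finset.sum_div]
    exact Finset.sum_congr rfl fun y _ => by ring
  refine ⟨hpos, he1, harm, ?_⟩
  intro n path
  induction n with
  | zero =>
    intro hpath
    have h0 : path 0 = e := hF0 _ (hpath 0 le_rfl)
    simp [Finset.Icc_eq_empty (by omega : ¬ (1 : ℕ) ≤ 0), h0, he1]
  | succ n ih =>
    intro hpath
    have ihn := ih (fun i hi => hpath i (le_trans hi (Nat.le_succ n)))
    have h0 : path 0 = e := hF0 _ (hpath 0 (Nat.zero_le _))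
    have hx : deg (path n) = n := hpath n (Nat.le_succ n)
    have hz : deg (path (n + 1)) = n + 1 := hpath (n + 1) le_rfl
    have hBeq : (⋂ i ∈ Finset.range (n + 1), {ω | Y i ω = path i})
        = {ω | Y 0 ω = path 0} ∩ ⋂ i ∈ Finset.Icc 1 n, {ω | Y i ω = path i} := by
      have hr : Finset.range (n + 1) = insert 0 (Finset.Icc 1 n) := by
        ext i
        simp only [Finset.mem_range, Finset.mem_insert, Finset.mem_Icc]
        omega
      rw [hr, Finset.set_biInter_insert]
    have hAeq : (⋂ i ∈ Finset.Icc 1 (n + 1), {ω | Y i ω = path i})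
        = (⋂ i ∈ Finset.Icc 1 n, {ω | Y i ω = path i}) ∩ {ω | Y (n + 1) ω = path (n + 1)} := by
      have hr : Finset.Icc 1 (n + 1) = insert (n + 1) (Finset.Icc 1 n) := by
        ext i
        simp only [Finset.mem_insert, Finset.mem_Icc]
        omega
      rw [hr, Finset.set_biInter_insert, Set.inter_comm]
    have h0P : P {ω | Y 0 ω = path 0}ᶜ = 0 := by
      rw [h0]
      simpa [ae_iff, Set.compl_setOf] using hY0
    have h0Q : Q {ω | Y 0 ω = path 0}ᶜ = 0 := by
      rw [h0]
      simpa [ae_iff, Set.compl_setOf] using hQ0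
    have hdropP : ∀ S : Set Ω, P ({ω | Y 0 ω = path 0} ∩ S) = P S := by
      intro S; rw [Set.inter_comm]; exact measure_inter_conull h0P
    have hdropQ : ∀ S : Set Ω, Q ({ω | Y 0 ω = path 0} ∩ S) = Q S := by
      intro S; rw [Set.inter_comm]; exact measure_inter_conull h0Q
    have hMP := hMarkov n (path (n + 1)) path
    have hMQ := hQMarkov n (path (n + 1)) path
    rw [hBeq, Set.inter_assoc, hdropP, hdropP] at hMP
    rw [hBeq, Set.inter_assoc, hdropQ, hdropQ] at hMQ
    -- pass to reals
    have hcP : (P {ω | Y n ω = path n}).toReal ≠ 0 := (hPpos n (path n) hx).ne'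
    have hQSx : (Q {ω | Y n ω = path n}).toReal = h (path n) * (P {ω | Y n ω = path n}).toReal := by
      rw [hdef (path n), hx, div_mul_cancel₀ _ hcP]
    have hhx : h (path n) ≠ 0 := (hpos (path n)).ne'
    set A := ⋂ i ∈ Finset.Icc 1 n, {ω | Y i ω = path i} with hA
    set Sx := {ω | Y n ω = path n} with hSx
    set Sz := {ω | Y (n + 1) ω = path (n + 1)} with hSz
    have hPr : (P (A ∩ Sz)).toReal * (P Sx).toReal
        = (P (Sx ∩ Sz)).toReal * (P A).toReal := by
      have := congrArg ENNReal.toReal hMP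
      rwa [ENNReal.toReal_mul, ENNReal.toReal_mul] at this
    have hQr : (Q (A ∩ Sz)).toReal * (Q Sx).toReal
        = (Q (Sx ∩ Sz)).toReal * (Q A).toReal := by
      have := congrArg ENNReal.toReal hMQ
      rwa [ENNReal.toReal_mul, ENNReal.toReal_mul] at this
    have hkey : (Q (Sx ∩ Sz)).toReal = (P (Sx ∩ Sz)).toReal * h (path (n + 1)) :=
      key n (path n) (path (n + 1)) hx hz
    rw [hQSx, hkey, ihn] at hQr
    -- hQr : QA1 * (h x * c) = (a * h z) * (h x * b)
    have h2 : (Q (A ∩ Sz)).toReal * (P Sx).toReal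
        = h (path (n + 1)) * ((P (Sx ∩ Sz)).toReal * (P A).toReal) := by
      apply mul_left_cancel₀ hhx
      linear_combination hQr
    rw [hAeq]
    apply mul_right_cancel₀ hcP
    linear_combination h2 - h (path (n + 1)) * hPr
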